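/- Every 2⊗4 SPPT state is separable: if ρ = X†X with X = [[X₁, SX₁],[0, X₂]] for 4×4 matrices X₁, X₂, S satisfying X₁†S†SX₁ = X₁†SS†X₁, then ρ is separable on ℂ²⊗ℂ⁴. -/

import Mathlib

open Matrix Kronecker Finset ComplexOrder

/-- 2x2 block matrix with n×n blocks, indexed by `Fin 2 × n`. -/
def blk {n : Type*} (A B C D : Matrix n n ℂ) :
    Matrix (Fin 2 × n) (Fin 2 × n) ℂ := fun p q =>
  if p.1 = 0 then (if q.1 = 0 then A p.2 q.2 else B p.2 q.2)
  else (if q.1 = 0 then C p.2 q.2 else D p.2 q.2)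

/-- Partial transpose on the first (qubit) factor. -/
def ptA {n : Type*} (ρ : Matrix (Fin 2 × n) (Fin 2 × n) ℂ) :
    Matrix (Fin 2 × n) (Fin 2 × n) ℂ := fun p q => ρ (q.1, p.2) (p.1, q.2)

/-- Separability of an (unnormalized) state on ℂ²⊗ℂⁿ. -/
def SepState {n : Type*} [Fintype n] (ρ : Matrix (Fin 2 × n) (Fin 2 × n) ℂ) : Prop :=
  ∃ (N : ℕ) (σ : Fin N → Matrix (Fin 2) (Fin 2) ℂ) (P : Fin N → Matrix n n ℂ),
    (∀ i, (σ i).PosSemidef) ∧ (∀ i, (P i).PosSemidef) ∧ ρ = ∑ i, σ i ⊗ₖ P i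


variable {n m : Type*}

lemma kron_conjT (A : Matrix (Fin 2) (Fin 2) ℂ) (B : Matrix m n ℂ) :
    (A ⊗ₖ B)ᴴ = Aᴴ ⊗ₖ Bᴴ := by
  ext ⟨i,a⟩ ⟨j,b⟩
  simp [conjTranspose_apply, kroneckerMap_apply, mul_comm]

lemma blk_add (A B C D A' B' C' D' : Matrix n n ℂ) :
    blk A B C D + blk A' B' C' D' = blk (A+A') (B+B') (C+C') (D+D') := by
  ext ⟨i,a⟩ ⟨j,b⟩
  fin_cases i <;> fin_cases j <;> simp [blk]

lemma blk_conjT (A B C D : Matrix n n ℂ) :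
    (blk A B C D)ᴴ = blk Aᴴ Cᴴ Bᴴ Dᴴ := by
  ext ⟨i,a⟩ ⟨j,b⟩
  fin_cases i <;> fin_cases j <;> simp [blk, conjTranspose_apply]

lemma blk_mul [Fintype n] (A B C D A' B' C' D' : Matrix n n ℂ) :
    blk A B C D * blk A' B' C' D'
      = blk (A*A'+B*C') (A*B'+B*D') (C*A'+D*C') (C*B'+D*D') := by
  ext ⟨i,a⟩ ⟨j,b⟩
  fin_cases i <;> fin_cases j <;>
    simp [blk, mul_apply, Fintype.sum_prod_type, Fin.sum_univ_two]

lemma ptA_blk (A B C D : Matrix n n ℂ) :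
    ptA (blk A B C D) = blk A C B D := by
  ext ⟨i,a⟩ ⟨j,b⟩
  fin_cases i <;> fin_cases j <;> simp [blk, ptA]

lemma blk_eq_sum (A B C D : Matrix n n ℂ) :
    blk A B C D = !![(1:ℂ),0;0,0] ⊗ₖ A + !![0,1;0,0] ⊗ₖ B
      + !![0,0;1,0] ⊗ₖ C + !![0,0;0,1] ⊗ₖ D := by
  ext ⟨i,a⟩ ⟨j,b⟩
  fin_cases i <;> fin_cases j <;> simp [blk, kroneckerMap_apply]

lemma kron_eq_blk (σ : Matrix (Fin 2) (Fin 2) ℂ) (P : Matrix n n ℂ) :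
    σ ⊗ₖ P = blk (σ 0 0 • P) (σ 0 1 • P) (σ 1 0 • P) (σ 1 1 • P) := by
  ext ⟨i,a⟩ ⟨j,b⟩
  fin_cases i <;> fin_cases j <;> simp [blk, kroneckerMap_apply]

lemma kron_conj_blk [Fintype m] [Fintype n] (B : Matrix m n ℂ) (T₁ T₂ T₃ T₄ : Matrix m m ℂ) :
    ((1 : Matrix (Fin 2) (Fin 2) ℂ) ⊗ₖ B)ᴴ * blk T₁ T₂ T₃ T₄ * ((1 : Matrix (Fin 2) (Fin 2) ℂ) ⊗ₖ B)
      = blk (Bᴴ*T₁*B) (Bᴴ*T₂*B) (Bᴴ*T₃*B) (Bᴴ*T₄*B) := by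
  rw [kron_conjT, conjTranspose_one, blk_eq_sum T₁, blk_eq_sum (Bᴴ*T₁*B)]
  simp only [Matrix.mul_add, Matrix.add_mul, ← mul_kronecker_mul, Matrix.one_mul, Matrix.mul_one]

lemma sep_add [Fintype n] {ρ ρ' : Matrix (Fin 2 × n) (Fin 2 × n) ℂ}
    (h : SepState ρ) (h' : SepState ρ') : SepState (ρ + ρ') := by
  obtain ⟨N, σ, P, hσ, hP, rfl⟩ := h
  obtain ⟨N', σ', P', hσ', hP', rfl⟩ := h'
  refine ⟨N + N', Fin.addCases σ σ', Fin.addCases P P', ?_, ?_, ?_⟩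
  · intro i; refine Fin.addCases (by simpa using hσ) (by simpa using hσ') i
  · intro i; refine Fin.addCases (by simpa using hP) (by simpa using hP') i
  · rw [Fin.sum_univ_add]
    simp

lemma sep_kron [Fintype n] {σ : Matrix (Fin 2) (Fin 2) ℂ} {P : Matrix n n ℂ}
    (hσ : σ.PosSemidef) (hP : P.PosSemidef) : SepState (σ ⊗ₖ P) :=
  ⟨1, fun _ => σ, fun _ => P, fun _ => hσ, fun _ => hP, by simp⟩

lemma kron_conj_kron [Fintype m] [Fintype n] (B : Matrix m n ℂ)
    (σ : Matrix (Fin 2) (Fin 2) ℂ) (P : Matrix m m ℂ) :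
    ((1 : Matrix (Fin 2) (Fin 2) ℂ) ⊗ₖ B)ᴴ * (σ ⊗ₖ P) * ((1 : Matrix (Fin 2) (Fin 2) ℂ) ⊗ₖ B) = σ ⊗ₖ (Bᴴ * P * B) := by
  rw [kron_conjT, conjTranspose_one, ← mul_kronecker_mul, ← mul_kronecker_mul,
    Matrix.one_mul, Matrix.mul_one]

lemma sep_conj [Fintype m] [Fintype n] {τ : Matrix (Fin 2 × m) (Fin 2 × m) ℂ}
    (h : SepState τ) (B : Matrix m n ℂ) : SepState (((1 : Matrix (Fin 2) (Fin 2) ℂ) ⊗ₖ B)ᴴ * τ * ((1 : Matrix (Fin 2) (Fin 2) ℂ) ⊗ₖ B)) := by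
  obtain ⟨N, σ, P, hσ, hP, rfl⟩ := h
  refine ⟨N, σ, fun i => Bᴴ * P i * B, hσ,
    fun i => (hP i).conjTranspose_mul_mul_same B, ?_⟩
  rw [Matrix.mul_sum, Matrix.sum_mul]
  exact Finset.sum_congr rfl fun i _ => kron_conj_kron B (σ i) (P i)

lemma qcon (H : Matrix (Fin 4) (Fin 4) ℂ) (hH : H.IsHermitian) (hnu : ¬ IsUnit H) :
    ∃ (k : ℕ) (Q : Matrix (Fin 4) (Fin k) ℂ),
      k ≤ 3 ∧ Qᴴ * Q = 1 ∧ (Q * Qᴴ) * H = H ∧ (∃ C : Matrix (Fin 4) (Fin k) ℂ, Q = H * C)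
        ∧ (H * H = H → Q * Qᴴ = H) := by
  classical
  set U : Matrix (Fin 4) (Fin 4) ℂ := (hH.eigenvectorUnitary : Matrix (Fin 4) (Fin 4) ℂ) with hU
  set d : Fin 4 → ℝ := hH.eigenvalues with hd
  have hU1 : Uᴴ * U = 1 := by
    rw [← Matrix.star_eq_conjTranspose]
    exact Matrix.mem_unitaryGroup_iff'.mp hH.eigenvectorUnitary.2
  have hU2 : U * Uᴴ = 1 := by
    rw [← Matrix.star_eq_conjTranspose]
    exact Matrix.mem_unitaryGroup_iff.mp hH.eigenvectorUnitary.2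
  have hUl : ∀ M : Matrix (Fin 4) (Fin 4) ℂ, Uᴴ * (U * M) = M := by
    intro M; rw [← Matrix.mul_assoc, hU1, Matrix.one_mul]
  have hUr : ∀ M : Matrix (Fin 4) (Fin 4) ℂ, U * (Uᴴ * M) = M := by
    intro M; rw [← Matrix.mul_assoc, hU2, Matrix.one_mul]
  have hDD : ∀ (f g : Fin 4 → ℂ) (M : Matrix (Fin 4) (Fin 4) ℂ),
      Matrix.diagonal f * (Matrix.diagonal g * M) = Matrix.diagonal (fun i => f i * g i) * M := by
    intro f g M
    rw [← Matrix.mul_assoc, Matrix.diagonal_mul_diagonal]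
  set dc : Fin 4 → ℂ := fun i => (RCLike.ofReal (d i) : ℂ) with hdc
  have hspec : H = U * (Matrix.diagonal dc * Uᴴ) := by
    rw [← Matrix.mul_assoc, ← Matrix.star_eq_conjTranspose]
    exact hH.spectral_theorem
  have hcancel : ∀ f g : Fin 4 → ℂ,
      U * (Matrix.diagonal f * Uᴴ) = U * (Matrix.diagonal g * Uᴴ) → f = g := by
    intro f g hfg
    have h2 := congrArg (fun M => Uᴴ * (M * U)) hfg
    simp only [Matrix.mul_assoc, hUl, hUr] at h2
    simp only [hU1, Matrix.mul_one] at h2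
    exact Matrix.diagonal_injective h2
  set t : Finset (Fin 4) := Finset.univ.filter (fun i => d i ≠ 0) with ht
  have hex : ∃ i, d i = 0 := by
    by_contra hall
    push_neg at hall
    apply hnu
    have h1 : H * (U * (Matrix.diagonal (fun i => (dc i)⁻¹) * Uᴴ)) = 1 := by
      rw [hspec]
      simp only [Matrix.mul_assoc, hUl, hUr]
      rw [hDD]
      have : (fun i => dc i * (dc i)⁻¹) = fun _ => (1:ℂ) := by
        funext i
        exact mul_inv_cancel₀ (by simp [hdc, hall i])
      rw [this, Matrix.diagonal_one, Matrix.one_mul, hU2]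
    rw [Matrix.isUnit_iff_isUnit_det]
    exact IsUnit.of_mul_eq_one _ (by rw [← Matrix.det_mul, h1, Matrix.det_one])
  have htne : t ≠ Finset.univ := by
    obtain ⟨i, hi⟩ := hex
    intro hcon
    have : i ∈ t := hcon ▸ Finset.mem_univ i
    simp [ht, hi] at this
  have hk3 : t.card ≤ 3 := by
    have h4 : (Finset.univ : Finset (Fin 4)).card = 4 := by simp
    have := Finset.card_lt_card (Finset.ssubset_univ_iff.mpr htne)
    omega
  set k := t.card with hkdef
  set e : Fin k → Fin 4 := fun j => ((t.orderIsoOfFin rfl j : t) : Fin 4) with he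
  have hemem : ∀ j, e j ∈ t := fun j => (t.orderIsoOfFin rfl j).2
  have heinj : Function.Injective e := fun a b hab =>
    (t.orderIsoOfFin rfl).injective (Subtype.ext hab)
  have hene : ∀ j, d (e j) ≠ 0 := by
    intro j
    have := hemem j
    simp only [ht, Finset.mem_filter] at this
    exact this.2
  set Q : Matrix (Fin 4) (Fin k) ℂ := fun a j => U a (e j) with hQ
  have hsum : ∀ (f : Fin 4 → ℂ), ∑ j : Fin k, f (e j) = ∑ i ∈ t, f i := by
    intro f
    rw [← Finset.sum_coe_sort t f]
    exact Fintype.sum_equiv (t.orderIsoOfFin rfl).toEquiv _ _ (fun j => rfl)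
  set χ : Fin 4 → ℂ := fun i => if i ∈ t then 1 else 0 with hχ
  have hQQ : Q * Qᴴ = U * (Matrix.diagonal χ * Uᴴ) := by
    ext a b
    rw [Matrix.mul_apply, Matrix.mul_apply]
    have hlhs : ∑ j : Fin k, Q a j * Qᴴ j b = ∑ i ∈ t, U a i * star (U b i) := by
      rw [← hsum (fun i => U a i * star (U b i))]
      exact Finset.sum_congr rfl fun j _ => by rw [Matrix.conjTranspose_apply]
    rw [hlhs]
    have hrhs : ∀ i, U a i * (Matrix.diagonal χ * Uᴴ) i b
        = if i ∈ t then U a i * star (U b i) else 0 := by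
      intro i
      rw [Matrix.diagonal_mul]
      by_cases hi : i ∈ t <;> simp [hχ, hi, Matrix.conjTranspose_apply, mul_assoc]
    rw [Finset.sum_congr rfl (fun i _ => hrhs i), ← Finset.sum_filter]
    congr 1
    ext i
    simp
  have hQ1 : Qᴴ * Q = 1 := by
    ext i j
    have h1 : (Uᴴ * U) (e i) (e j) = (1 : Matrix (Fin 4) (Fin 4) ℂ) (e i) (e j) := by
      rw [hU1]
    simp only [Matrix.mul_apply, Matrix.conjTranspose_apply] at h1 ⊢
    simp only [hQ]
    rw [h1]
    by_cases hij : i = j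
    · simp [hij, Matrix.one_apply]
    · simp [Matrix.one_apply, hij, heinj.ne hij]
  have hχd : (fun i => χ i * dc i) = dc := by
    funext i
    by_cases hi : i ∈ t
    · simp [hχ, hi]
    · have : d i = 0 := by
        by_contra hne
        exact hi (by simp [ht, hne])
      simp [hχ, hi, hdc, this]
  have hPH : (Q * Qᴴ) * H = H := by
    rw [hQQ, hspec]
    simp only [Matrix.mul_assoc, hUl, hUr]
    rw [hDD, hχd]
  have hHQ : H * Q = Q * Matrix.diagonal (fun j => dc (e j)) := by
    ext a j
    have h1 : (H * U) a (e j) = (U * Matrix.diagonal dc) a (e j) := by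
      rw [hspec, Matrix.mul_assoc, Matrix.mul_assoc, hU1, Matrix.mul_one]
    simp only [Matrix.mul_apply] at h1 ⊢
    simp only [hQ] at h1 ⊢
    rw [h1]
    simp [Matrix.diagonal_apply, Finset.sum_ite_eq]
  have hQC : ∃ C : Matrix (Fin 4) (Fin k) ℂ, Q = H * C := by
    refine ⟨Q * Matrix.diagonal (fun j => (dc (e j))⁻¹), ?_⟩
    rw [← Matrix.mul_assoc, hHQ, Matrix.mul_assoc, Matrix.diagonal_mul_diagonal]
    have : (fun j => dc (e j) * (dc (e j))⁻¹) = fun _ => (1:ℂ) := by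
      funext j
      exact mul_inv_cancel₀ (by simp [hdc, hene j])
    rw [this, Matrix.diagonal_one, Matrix.mul_one]
  refine ⟨k, Q, hk3, hQ1, hPH, hQC, ?_⟩
  intro hproj
  have hdd : (fun i => dc i * dc i) = dc := by
    apply hcancel
    have hstep : U * (Matrix.diagonal (fun i => dc i * dc i) * Uᴴ) = H * H := by
      rw [← hDD dc dc Uᴴ, hspec]
      simp only [Matrix.mul_assoc, hUl]
    rw [hstep, hproj, hspec]
  have hχdc : χ = dc := by
    funext i
    by_cases hi : i ∈ t
    · have hdcne : dc i ≠ 0 := by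
        simp only [hdc]
        have : d i ≠ 0 := by simpa [ht] using hi
        simpa using this
      have h2 : dc i * dc i = dc i := congrFun hdd i
      have h3 : dc i = 1 := by
        have := mul_right_cancel₀ hdcne (h2.trans (one_mul (dc i)).symm)
        exact this
      simp [hχ, hi, h3]
    · have : d i = 0 := by
        by_contra hne
        exact hi (by simp [ht, hne])
      simp [hχ, hi, hdc, this]
  rw [hQQ, hχdc, ← hspec]

lemma eigvec (S : Matrix (Fin 4) (Fin 4) ℂ) (hN : Sᴴ * S = S * Sᴴ) :
    ∃ (μ : ℂ) (v : Fin 4 → ℂ), v ≠ 0 ∧ S.mulVec v = μ • v ∧ Sᴴ.mulVec v = (star μ) • v := by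
  obtain ⟨μ, hμ⟩ := Module.End.exists_eigenvalue (Matrix.mulVecLin S)
  obtain ⟨v, hv⟩ := hμ.exists_hasEigenvector
  refine ⟨μ, v, hv.2, ?_, ?_⟩
  · have := hv.apply_eq_smul
    simpa [Matrix.mulVecLin_apply] using this
  · have hSv : S.mulVec v = μ • v := by
      have := hv.apply_eq_smul
      simpa [Matrix.mulVecLin_apply] using this
    set R : Matrix (Fin 4) (Fin 4) ℂ := S - μ • 1 with hR
    have hRv : R.mulVec v = 0 := by
      simp [hR, Matrix.sub_mulVec, Matrix.smul_mulVec, hSv]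
    have hRH : Rᴴ = Sᴴ - (star μ) • 1 := by
      simp [hR, Matrix.conjTranspose_smul]
    have hRn : Rᴴ * R = R * Rᴴ := by
      rw [hRH, hR]
      simp only [Matrix.sub_mul, Matrix.mul_sub, Matrix.smul_mul, Matrix.mul_smul,
        Matrix.one_mul, Matrix.mul_one, smul_smul, hN]
      module
    have hw : star (Rᴴ.mulVec v) ⬝ᵥ (Rᴴ.mulVec v) = 0 := by
      rw [Matrix.star_mulVec, Matrix.conjTranspose_conjTranspose,
        Matrix.dotProduct_mulVec, Matrix.vecMul_vecMul, ← hRn, ← Matrix.vecMul_vecMul,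
        ← Matrix.dotProduct_mulVec, ← Matrix.star_mulVec, hRv]
      simp
    have hw0 : Rᴴ.mulVec v = 0 := dotProduct_star_self_eq_zero.mp hw
    rw [hRH, Matrix.sub_mulVec, Matrix.smul_mulVec, Matrix.one_mulVec] at hw0
    exact sub_eq_zero.mp hw0

lemma m0_psd (S : Matrix (Fin 4) (Fin 4) ℂ) :
    (blk 1 S Sᴴ (Sᴴ*S)).PosSemidef := by
  have h : blk 1 S Sᴴ (Sᴴ*S) = (blk 1 S 0 0)ᴴ * blk 1 S 0 0 := by
    rw [blk_conjT, blk_mul]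
    simp
  rw [h]
  exact Matrix.posSemidef_conjTranspose_mul_self _

lemma tau_psd (S : Matrix (Fin 4) (Fin 4) ℂ) {k : ℕ} (Q : Matrix (Fin 4) (Fin k) ℂ)
    (hQN : Qᴴ * (Sᴴ * S) * Q = Qᴴ * (S * Sᴴ) * Q) :
    (((1 : Matrix (Fin 2) (Fin 2) ℂ) ⊗ₖ Q)ᴴ * blk 1 S Sᴴ (Sᴴ*S)
      * ((1 : Matrix (Fin 2) (Fin 2) ℂ) ⊗ₖ Q)).PosSemidef ∧
    (ptA (((1 : Matrix (Fin 2) (Fin 2) ℂ) ⊗ₖ Q)ᴴ * blk 1 S Sᴴ (Sᴴ*S)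
      * ((1 : Matrix (Fin 2) (Fin 2) ℂ) ⊗ₖ Q))).PosSemidef := by
  constructor
  · exact (m0_psd S).conjTranspose_mul_mul_same _
  · have e1 := kron_conj_blk Q (1 : Matrix (Fin 4) (Fin 4) ℂ) S Sᴴ (Sᴴ*S)
    have e2 := kron_conj_blk Q (1 : Matrix (Fin 4) (Fin 4) ℂ) Sᴴ S (S*Sᴴ)
    rw [e1, ptA_blk, hQN]
    rw [← e2]
    have h : blk 1 Sᴴ S (S*Sᴴ) = (blk 1 Sᴴ 0 0)ᴴ * blk 1 Sᴴ 0 0 := by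
      rw [blk_conjT, blk_mul]
      simp
    rw [h]
    exact (Matrix.posSemidef_conjTranspose_mul_self _).conjTranspose_mul_mul_same _

lemma vecMulVec_mul (v w : Fin 4 → ℂ) (S : Matrix (Fin 4) (Fin 4) ℂ) :
    Matrix.vecMulVec v w * S = Matrix.vecMulVec v (w ᵥ* S) := by
  ext i j
  simp only [Matrix.mul_apply, Matrix.vecMulVec_apply, Matrix.vecMul, dotProduct,
    Finset.mul_sum]
  exact Finset.sum_congr rfl fun k _ => by ring

lemma mul_vecMulVec (v w : Fin 4 → ℂ) (S : Matrix (Fin 4) (Fin 4) ℂ) :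
    S * Matrix.vecMulVec v w = Matrix.vecMulVec (S *ᵥ v) w := by
  ext i j
  simp only [Matrix.mul_apply, Matrix.vecMulVec_apply, Matrix.mulVec, dotProduct,
    Finset.sum_mul]
  exact Finset.sum_congr rfl fun k _ => by ring

lemma vecMulVec_smul (v w : Fin 4 → ℂ) (a : ℂ) :
    Matrix.vecMulVec v (a • w) = a • Matrix.vecMulVec v w := by
  ext i j
  simp [Matrix.vecMulVec_apply]
  ring

lemma sep_M0 (S : Matrix (Fin 4) (Fin 4) ℂ) (hN : Sᴴ * S = S * Sᴴ)
    (horodecki : ∀ k : ℕ, k ≤ 3 →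
      ∀ τ : Matrix (Fin 2 × Fin k) (Fin 2 × Fin k) ℂ,
        τ.PosSemidef → (ptA τ).PosSemidef → SepState τ) :
    SepState (blk 1 S Sᴴ (Sᴴ*S)) := by
  obtain ⟨μ, v, hv0, hSv, hSHv⟩ := eigvec S hN
  set κ : ℂ := dotProduct (star v) v with hκ
  have hκ0 : κ ≠ 0 := fun h => hv0 (dotProduct_star_self_eq_zero.mp h)
  have hκnn : 0 ≤ κ := dotProduct_star_self_nonneg v
  have hκs : star κ = κ := by
    simp only [hκ, dotProduct, star_sum, star_mul', star_star, Pi.star_apply]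
    exact Finset.sum_congr rfl fun k _ => mul_comm _ _
  have hκinn : 0 ≤ κ⁻¹ := by
    obtain ⟨hre, him⟩ := Complex.nonneg_iff.mp hκnn
    have : κ = (κ.re : ℂ) := Complex.ext rfl him.symm
    rw [this, ← Complex.ofReal_inv]
    exact Complex.zero_le_real.mpr (inv_nonneg.mpr hre)
  set M : Matrix (Fin 4) (Fin 4) ℂ := Matrix.vecMulVec v (star v) with hM
  set c : Matrix (Fin 4) (Fin 4) ℂ := κ⁻¹ • M with hc
  have hvS : star v ᵥ* S = μ • star v := by
    rw [← Matrix.conjTranspose_conjTranspose S, ← Matrix.star_mulVec, hSHv]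
    simp [star_smul]
  have hvSH : star v ᵥ* Sᴴ = star μ • star v := by
    rw [← Matrix.star_mulVec, hSv]
    simp [star_smul]
  have hSc : S * c = μ • c := by
    rw [hc, Matrix.mul_smul, hM, mul_vecMulVec, hSv, smul_comm]
    congr 1
    ext i j
    simp [Matrix.vecMulVec_apply]
    ring
  have hcS : c * S = μ • c := by
    rw [hc, Matrix.smul_mul, hM, vecMulVec_mul, hvS, vecMulVec_smul, smul_comm]
  have hSHc : Sᴴ * c = star μ • c := by
    rw [hc, Matrix.mul_smul, hM, mul_vecMulVec, hSHv, smul_comm]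
    congr 1
    ext i j
    simp [Matrix.vecMulVec_apply]
    ring
  have hcSH : c * Sᴴ = star μ • c := by
    rw [hc, Matrix.smul_mul, hM, vecMulVec_mul, hvSH, vecMulVec_smul, smul_comm]
  have hMM : M * M = κ • M := by
    ext i j
    simp only [hM, Matrix.mul_apply, Matrix.vecMulVec_apply, Matrix.smul_apply, smul_eq_mul, hκ,
      dotProduct, Finset.sum_mul]
    exact Finset.sum_congr rfl fun k _ => by ring
  have hcc : c * c = c := by
    rw [hc, Matrix.smul_mul, Matrix.mul_smul, hMM, smul_smul, smul_smul]
    congr 1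
    field_simp
  have hMherm : Mᴴ = M := by
    ext i j
    simp only [Matrix.conjTranspose_apply, hM, Matrix.vecMulVec_apply, star_mul', star_star,
      Pi.star_apply]
    ring
  have hcherm : cᴴ = c := by
    have hsk : star (κ⁻¹) = κ⁻¹ := by rw [star_inv₀, hκs]
    rw [hc, Matrix.conjTranspose_smul, hMherm, hsk]
  have hMx : ∀ x : Fin 4 → ℂ, M *ᵥ x = (dotProduct (star v) x) • v := by
    intro x
    ext i
    simp only [hM, Matrix.mulVec, dotProduct, Matrix.vecMulVec_apply, Pi.smul_apply,
      smul_eq_mul]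
    rw [Finset.sum_mul]
    exact Finset.sum_congr rfl fun k _ => by ring
  have hcpsd : c.PosSemidef := by
    refine Matrix.posSemidef_iff_dotProduct_mulVec.mpr ⟨hcherm, ?_⟩
    intro x
    rw [hc, Matrix.smul_mulVec, hMx]
    have hxv : dotProduct (star x) v = star (dotProduct (star v) x) := by
      simp only [dotProduct, star_sum, star_mul', star_star, Pi.star_apply]
      exact Finset.sum_congr rfl fun k _ => by ring
    rw [dotProduct_smul, dotProduct_smul, hxv, smul_eq_mul, smul_eq_mul]
    exact mul_nonneg hκinn (mul_star_self_nonneg _)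
  set H' : Matrix (Fin 4) (Fin 4) ℂ := 1 - c with hH'
  have hH'herm : H'.IsHermitian := by
    show H'ᴴ = H'
    rw [hH', Matrix.conjTranspose_sub, Matrix.conjTranspose_one, hcherm]
  have hH'proj : H' * H' = H' := by
    rw [hH']
    simp only [Matrix.mul_sub, Matrix.sub_mul, Matrix.one_mul, Matrix.mul_one, hcc]
    abel
  have hcv : c *ᵥ v = v := by
    rw [hc, Matrix.smul_mulVec, hMx, ← hκ, smul_smul, inv_mul_cancel₀ hκ0, one_smul]
  have hH'v : H' *ᵥ v = 0 := by
    rw [hH', Matrix.sub_mulVec, Matrix.one_mulVec, hcv, sub_self]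
  have hH'nu : ¬ IsUnit H' := by
    intro hu
    obtain ⟨u, hu'⟩ := hu
    have h1 : (↑u⁻¹ : Matrix (Fin 4) (Fin 4) ℂ) * H' = 1 := by rw [← hu']; exact u.inv_mul
    have h2 : v = 0 := by
      have h3 := congrArg (fun A => A *ᵥ v) h1
      rw [← Matrix.mulVec_mulVec, hH'v, Matrix.mulVec_zero, Matrix.one_mulVec] at h3
      exact h3.symm
    exact hv0 h2
  obtain ⟨k, Q, hk3, hQ1, hPH', hQC, hprojQ⟩ := qcon H' hH'herm hH'nu
  have hPQ : Q * Qᴴ = H' := hprojQ hH'proj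
  have hQN : Qᴴ * (Sᴴ * S) * Q = Qᴴ * (S * Sᴴ) * Q := by rw [hN]
  obtain ⟨hps1, hps2⟩ := tau_psd S Q hQN
  have hsepτ := horodecki k hk3 _ hps1 hps2
  have hsep2 := sep_conj hsepτ Qᴴ
  set σμ : Matrix (Fin 2) (Fin 2) ℂ := !![1, μ; star μ, star μ * μ] with hσμ
  have hσμpsd : σμ.PosSemidef := by
    have h : σμ = (!![(1:ℂ), μ; 0, 0])ᴴ * !![(1:ℂ), μ; 0, 0] := by
      ext i j
      fin_cases i <;> fin_cases j <;>
        simp [Matrix.mul_apply, Fin.sum_univ_two, hσμ, Matrix.conjTranspose_apply]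
    rw [h]
    exact Matrix.posSemidef_conjTranspose_mul_self _
  have hQXQ : ∀ X : Matrix (Fin 4) (Fin 4) ℂ, Q * (Qᴴ * X * Q) * Qᴴ = H' * X * H' := by
    intro X
    rw [← hPQ]
    simp only [Matrix.mul_assoc]
  have hSSc : (Sᴴ*S) * c = (star μ * μ) • c := by
    rw [Matrix.mul_assoc, hSc, Matrix.mul_smul, hSHc, smul_smul, mul_comm μ (star μ)]
  have hcSS : c * (Sᴴ*S) = (star μ * μ) • c := by
    rw [← Matrix.mul_assoc, hcSH, Matrix.smul_mul, hcS, smul_smul]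
  have hcomp1 : (1:ℂ) • c + H' * 1 * H' = 1 := by
    rw [one_smul, Matrix.mul_one, hH'proj, hH']
    abel
  have hcomp2 : μ • c + H' * S * H' = S := by
    rw [hH']
    simp only [Matrix.mul_sub, Matrix.sub_mul, Matrix.one_mul, Matrix.mul_one, hcS, hSc,
      Matrix.smul_mul, hcc]
    module
  have hcomp3 : star μ • c + H' * Sᴴ * H' = Sᴴ := by
    rw [hH']
    simp only [Matrix.mul_sub, Matrix.sub_mul, Matrix.one_mul, Matrix.mul_one, hcSH, hSHc,
      Matrix.smul_mul, hcc]
    module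
  have hcomp4 : (star μ * μ) • c + H' * (Sᴴ*S) * H' = Sᴴ*S := by
    rw [hH']
    simp only [Matrix.mul_sub, Matrix.sub_mul, Matrix.one_mul, Matrix.mul_one, hSSc, hcSS,
      Matrix.smul_mul, hcc]
    module
  have hmain : blk 1 S Sᴴ (Sᴴ*S) = σμ ⊗ₖ c +
      ((1 : Matrix (Fin 2) (Fin 2) ℂ) ⊗ₖ Qᴴ)ᴴ
        * (((1 : Matrix (Fin 2) (Fin 2) ℂ) ⊗ₖ Q)ᴴ * blk 1 S Sᴴ (Sᴴ*S)
            * ((1 : Matrix (Fin 2) (Fin 2) ℂ) ⊗ₖ Q))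
        * ((1 : Matrix (Fin 2) (Fin 2) ℂ) ⊗ₖ Qᴴ) := by
    rw [kron_conj_blk Q (1 : Matrix (Fin 4) (Fin 4) ℂ) S Sᴴ (Sᴴ*S),
      kron_conj_blk Qᴴ (Qᴴ * 1 * Q) (Qᴴ * S * Q) (Qᴴ * Sᴴ * Q) (Qᴴ * (Sᴴ*S) * Q),
      kron_eq_blk σμ c, blk_add]
    simp only [Matrix.conjTranspose_conjTranspose, hQXQ]
    have hs00 : σμ 0 0 = 1 := by simp [hσμ]
    have hs01 : σμ 0 1 = μ := by simp [hσμ]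
    have hs10 : σμ 1 0 = star μ := by simp [hσμ]
    have hs11 : σμ 1 1 = star μ * μ := by simp [hσμ]
    rw [hs00, hs01, hs10, hs11, hcomp1, hcomp2, hcomp3, hcomp4]
  rw [hmain]
  exact sep_add (sep_kron hσμpsd hcpsd) hsep2

theorem stmt12 (X₁ X₂ S : Matrix (Fin 4) (Fin 4) ℂ)
    (hsppt : X₁ᴴ * Sᴴ * S * X₁ = X₁ᴴ * S * Sᴴ * X₁)
    (horodecki : ∀ k : ℕ, k ≤ 3 →
      ∀ τ : Matrix (Fin 2 × Fin k) (Fin 2 × Fin k) ℂ,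
        τ.PosSemidef → (ptA τ).PosSemidef → SepState τ) :
    SepState ((blk X₁ (S * X₁) 0 X₂)ᴴ * blk X₁ (S * X₁) 0 X₂) := by
  have hsppt' : X₁ᴴ * (Sᴴ * (S * X₁)) = X₁ᴴ * (S * (Sᴴ * X₁)) := by
    simpa only [Matrix.mul_assoc] using hsppt
  have psd2 : (!![(0:ℂ),0;0,1]).PosSemidef := by
    have h : !![(0:ℂ),0;0,1] = (!![(0:ℂ),0;0,1])ᴴ * !![(0:ℂ),0;0,1] := by
      ext i j
      fin_cases i <;> fin_cases j <;>
        simp [Matrix.mul_apply, Fin.sum_univ_two, Matrix.conjTranspose_apply]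
    rw [h]
    exact Matrix.posSemidef_conjTranspose_mul_self _
  have hρ : (blk X₁ (S * X₁) 0 X₂)ᴴ * blk X₁ (S * X₁) 0 X₂
      = blk (X₁ᴴ*1*X₁) (X₁ᴴ*S*X₁) (X₁ᴴ*Sᴴ*X₁) (X₁ᴴ*(Sᴴ*S)*X₁)
        + !![(0:ℂ),0;0,1] ⊗ₖ (X₂ᴴ*X₂) := by
    rw [blk_conjT, blk_mul, kron_eq_blk, blk_add]
    simp [Matrix.conjTranspose_mul, Matrix.mul_assoc]
  rw [hρ]
  refine sep_add ?_ (sep_kron psd2 (Matrix.posSemidef_conjTranspose_mul_self X₂))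
  rw [← kron_conj_blk X₁ (1 : Matrix (Fin 4) (Fin 4) ℂ) S Sᴴ (Sᴴ*S)]
  set H : Matrix (Fin 4) (Fin 4) ℂ := X₁ * X₁ᴴ with hHdef
  by_cases hu : IsUnit H
  · -- X₁ invertible, S normal
    obtain ⟨u, hu'⟩ := hu
    have hXB : X₁ * (X₁ᴴ * (↑u⁻¹ : Matrix (Fin 4) (Fin 4) ℂ)) = 1 := by
      rw [← Matrix.mul_assoc, ← hHdef, ← hu']
      exact u.mul_inv
    set B : Matrix (Fin 4) (Fin 4) ℂ := X₁ᴴ * (↑u⁻¹ : Matrix (Fin 4) (Fin 4) ℂ) with hBdef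
    have hBXH : ∀ M : Matrix (Fin 4) (Fin 4) ℂ, Bᴴ * (X₁ᴴ * M) = M := by
      intro M
      rw [← Matrix.mul_assoc, ← Matrix.conjTranspose_mul, hXB, Matrix.conjTranspose_one,
        Matrix.one_mul]
    have hN : Sᴴ * S = S * Sᴴ := by
      have h2 := congrArg (fun M => Bᴴ * (M * B)) hsppt'
      simp only [Matrix.mul_assoc] at h2
      rw [hXB] at h2
      simp only [Matrix.mul_one] at h2
      rw [hBXH, hBXH] at h2
      exact h2
    exact sep_conj (sep_M0 S hN horodecki) X₁
  · obtain ⟨k, Q, hk3, hQ1, hPH, hQC, _⟩ :=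
      qcon H (Matrix.isHermitian_mul_conjTranspose_self X₁) hu
    have hPh : (Q * Qᴴ)ᴴ = Q * Qᴴ := by
      simp [Matrix.conjTranspose_mul]
    have hHP : H * (Q * Qᴴ) = H := by
      have h := congrArg Matrix.conjTranspose hPH
      rw [Matrix.conjTranspose_mul, hPh, (Matrix.isHermitian_mul_conjTranspose_self X₁).eq] at h
      exact h
    have hPX : (Q * Qᴴ) * X₁ = X₁ := by
      have hRR : (X₁ - (Q * Qᴴ) * X₁) * (X₁ - (Q * Qᴴ) * X₁)ᴴ = 0 := by
        rw [Matrix.conjTranspose_sub, Matrix.conjTranspose_mul, hPh]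
        simp only [Matrix.sub_mul, Matrix.mul_sub]
        rw [← hHdef]
        rw [show X₁ * (X₁ᴴ * (Q * Qᴴ)) = H * (Q * Qᴴ) from by rw [← Matrix.mul_assoc, ← hHdef]]
        rw [show (Q * Qᴴ) * X₁ * X₁ᴴ = (Q * Qᴴ) * H from by rw [Matrix.mul_assoc, ← hHdef]]
        rw [show (Q * Qᴴ) * X₁ * (X₁ᴴ * (Q * Qᴴ)) = (Q * Qᴴ) * (H * (Q * Qᴴ)) from by
          simp only [Matrix.mul_assoc, hHdef]]
        rw [hHP, hPH]
        abel
      have := Matrix.self_mul_conjTranspose_eq_zero.mp hRR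
      have h2 : X₁ - (Q * Qᴴ) * X₁ = 0 := this
      rw [sub_eq_zero] at h2
      exact h2.symm
    have hQN : Qᴴ * (Sᴴ * S) * Q = Qᴴ * (S * Sᴴ) * Q := by
      obtain ⟨C, hC⟩ := hQC
      have hQB : Q = X₁ * (X₁ᴴ * C) := by rw [hC, hHdef, Matrix.mul_assoc]
      rw [hQB]
      have h2 := congrArg (fun M => (X₁ᴴ * C)ᴴ * (M * (X₁ᴴ * C))) hsppt'
      simp only [Matrix.mul_assoc] at h2 ⊢
      simp only [Matrix.conjTranspose_mul, Matrix.conjTranspose_conjTranspose,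
        Matrix.mul_assoc] at h2 ⊢
      exact h2
    obtain ⟨hps1, hps2⟩ := tau_psd S Q hQN
    have hsepτ := horodecki k hk3 _ hps1 hps2
    have hsep2 := sep_conj hsepτ (Qᴴ * X₁)
    have hPX2 : Q * (Qᴴ * X₁) = X₁ := by rw [← Matrix.mul_assoc]; exact hPX
    have hXQ : X₁ᴴ * (Q * Qᴴ) = X₁ᴴ := by
      have h := congrArg Matrix.conjTranspose hPX
      rw [Matrix.conjTranspose_mul, hPh] at h
      exact h
    have hcomp : ∀ X : Matrix (Fin 4) (Fin 4) ℂ,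
        (Qᴴ*X₁)ᴴ * (Qᴴ * X * Q) * (Qᴴ*X₁) = X₁ᴴ * X * X₁ := by
      intro X
      simp only [Matrix.conjTranspose_mul, Matrix.conjTranspose_conjTranspose, Matrix.mul_assoc]
      rw [hPX2, ← Matrix.mul_assoc Q Qᴴ (X * X₁), ← Matrix.mul_assoc X₁ᴴ (Q*Qᴴ) (X*X₁), hXQ]
    have hmain : ((1 : Matrix (Fin 2) (Fin 2) ℂ) ⊗ₖ (Qᴴ * X₁))ᴴ
        * (((1 : Matrix (Fin 2) (Fin 2) ℂ) ⊗ₖ Q)ᴴ * blk 1 S Sᴴ (Sᴴ*S)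
            * ((1 : Matrix (Fin 2) (Fin 2) ℂ) ⊗ₖ Q))
        * ((1 : Matrix (Fin 2) (Fin 2) ℂ) ⊗ₖ (Qᴴ * X₁))
        = ((1 : Matrix (Fin 2) (Fin 2) ℂ) ⊗ₖ X₁)ᴴ * blk 1 S Sᴴ (Sᴴ*S)
            * ((1 : Matrix (Fin 2) (Fin 2) ℂ) ⊗ₖ X₁) := by
      rw [kron_conj_blk Q (1 : Matrix (Fin 4) (Fin 4) ℂ) S Sᴴ (Sᴴ*S),
        kron_conj_blk (Qᴴ * X₁) (Qᴴ * 1 * Q) (Qᴴ * S * Q) (Qᴴ * Sᴴ * Q) (Qᴴ * (Sᴴ*S) * Q),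
        kron_conj_blk X₁ (1 : Matrix (Fin 4) (Fin 4) ℂ) S Sᴴ (Sᴴ*S),
        hcomp 1, hcomp S, hcomp Sᴴ, hcomp (Sᴴ*S)]
    rw [← hmain]
    exact hsep2
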